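/- Let p ≥ 1 and let G be a graph in W_p with α(G) > 1. Then for every vertex x of G, the localization G_x = G − N_G[x] also belongs to W_p. Moreover, if S is an independent set of G with |S| < α(G), then G_S belongs to W_p; and if p ≥ 2, then G_S has no isolated vertices. -/
import Mathlib


open Classical

noncomputable section

variable {V : Type*}

/-- `s` is an independent set of `G`. -/
def IndepSet (G : SimpleGraph V) (s : Set V) : Prop :=
  ∀ ⦃a⦄, a ∈ s → ∀ ⦃b⦄, b ∈ s → ¬ G.Adj a b

/-- The independence number `α(G)`. -/
def alphaNum [Fintype V] (G : SimpleGraph V) : ℕ :=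
  sSup {n | ∃ s : Set V, IndepSet G s ∧ s.ncard = n}

/-- `s` is a maximal independent set of `G`. -/
def MaximalIndep (G : SimpleGraph V) (s : Set V) : Prop :=
  IndepSet G s ∧ ∀ t : Set V, IndepSet G t → s ⊆ t → s = t

/-- `G` is well-covered: all maximal independent sets have cardinality `α(G)`. -/
def WellCovered [Fintype V] (G : SimpleGraph V) : Prop :=
  ∀ s : Set V, MaximalIndep G s → s.ncard = alphaNum G

/-- The open neighborhood `N_G(S)` of a set of vertices. -/
def openNbhd (G : SimpleGraph V) (S : Set V) : Set V :=
  {v | v ∉ S ∧ ∃ u ∈ S, G.Adj u v}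

/-- The closed neighborhood `N_G[S]`. -/
def closedNbhd (G : SimpleGraph V) (S : Set V) : Set V :=
  S ∪ openNbhd G S

/-- The vertex set of the localization `G_S = G - N_G[S]`. -/
def localSet (G : SimpleGraph V) (S : Set V) : Set V :=
  (closedNbhd G S)ᶜ

/-- `G` belongs to the class `W_p`. -/
def Wp (p : ℕ) [Fintype V] (G : SimpleGraph V) : Prop :=
  p ≤ Fintype.card V ∧
    ∀ A : Fin p → Set V,
      (∀ i, IndepSet G (A i)) →
      (∀ i j, i ≠ j → Disjoint (A i) (A j)) →
      ∃ S : Fin p → Set V,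
        (∀ i j, i ≠ j → Disjoint (S i) (S j)) ∧
        (∀ i, IndepSet G (S i) ∧ (S i).ncard = alphaNum G) ∧
        (∀ i, A i ⊆ S i)

/-- `G` is `α`-critical: deleting any edge increases the independence number. -/
def AlphaCritical [Fintype V] (G : SimpleGraph V) : Prop :=
  ∀ a b : V, G.Adj a b → alphaNum G < alphaNum (G.deleteEdges {s(a, b)})

/-- The vertex set of `G_{ab} = G - (N_G(a) ∪ N_G(b))`. -/
def edgeLocalSet (G : SimpleGraph V) (a b : V) : Set V :=
  (G.neighborSet a ∪ G.neighborSet b)ᶜ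

-- helpers
lemma indepSet_empty (G : SimpleGraph V) : IndepSet G (∅ : Set V) := by
  intro a ha; exact absurd ha (Set.notMem_empty a)

lemma IndepSet.mono {G : SimpleGraph V} {s t : Set V} (h : IndepSet G s) (hts : t ⊆ s) :
    IndepSet G t := fun a ha b hb => h (hts ha) (hts hb)

lemma bddAbove_indep [Fintype V] (G : SimpleGraph V) :
    BddAbove {n | ∃ s : Set V, IndepSet G s ∧ s.ncard = n} := by
  refine ⟨Fintype.card V, ?_⟩
  rintro n ⟨t, -, rfl⟩
  simpa [Set.ncard_univ, Nat.card_eq_fintype_card] using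
    Set.ncard_le_ncard (Set.subset_univ t) Set.finite_univ

lemma ncard_le_alphaNum [Fintype V] {G : SimpleGraph V} {s : Set V} (h : IndepSet G s) :
    s.ncard ≤ alphaNum G :=
  le_csSup (bddAbove_indep G) ⟨s, h, rfl⟩

lemma alphaNum_le [Fintype V] {G : SimpleGraph V} {m : ℕ}
    (h : ∀ t : Set V, IndepSet G t → t.ncard ≤ m) : alphaNum G ≤ m := by
  have hne : {n | ∃ s : Set V, IndepSet G s ∧ s.ncard = n}.Nonempty :=
    ⟨0, ∅, indepSet_empty G, by simp⟩
  apply csSup_le hne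
  rintro n ⟨t, ht, rfl⟩; exact h t ht

lemma exists_max_indep [Fintype V] (G : SimpleGraph V) :
    ∃ s : Set V, IndepSet G s ∧ s.ncard = alphaNum G := by
  have hne : {n | ∃ s : Set V, IndepSet G s ∧ s.ncard = n}.Nonempty :=
    ⟨0, ∅, indepSet_empty G, by simp⟩
  exact Nat.sSup_mem hne (bddAbove_indep G)

lemma mem_localSet {G : SimpleGraph V} {S : Set V} {v : V} :
    v ∈ localSet G S ↔ v ∉ S ∧ ∀ u ∈ S, ¬ G.Adj u v := by
  simp only [localSet, closedNbhd, openNbhd, Set.mem_compl_iff, Set.mem_union, Set.mem_setOf_eq]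
  push_neg
  tauto

lemma diff_subset_localSet {G : SimpleGraph V} {L S : Set V} (hL : IndepSet G L) (hSL : S ⊆ L) :
    L \ S ⊆ localSet G S := by
  intro v hv
  rw [mem_localSet]
  exact ⟨hv.2, fun u hu hadj => hL (hSL hu) hv.1 hadj⟩

lemma union_indep {G : SimpleGraph V} {S T : Set V} (hS : IndepSet G S) (hT : IndepSet G T)
    (hTU : T ⊆ localSet G S) : IndepSet G (S ∪ T) := by
  intro a ha b hb hadj
  rcases ha with ha | ha <;> rcases hb with hb | hb
  · exact hS ha hb hadj
  · exact (mem_localSet.1 (hTU hb)).2 a ha hadj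
  · exact (mem_localSet.1 (hTU ha)).2 b hb hadj.symm
  · exact hT ha hb hadj

lemma localSet_disjoint {G : SimpleGraph V} {S T : Set V} (hTU : T ⊆ localSet G S) :
    Disjoint S T :=
  Set.disjoint_left.mpr fun v hv hv' => (mem_localSet.1 (hTU hv')).1 hv

lemma wp_extend [Fintype V] {p : ℕ} (hp : 1 ≤ p) {G : SimpleGraph V} (hG : Wp p G)
    {A : Set V} (hA : IndepSet G A) :
    ∃ L : Set V, A ⊆ L ∧ IndepSet G L ∧ L.ncard = alphaNum G := by
  set i0 : Fin p := ⟨0, hp⟩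
  set B : Fin p → Set V := fun i => if i = i0 then A else ∅ with hB
  obtain ⟨L, _, hLI, hLB⟩ := hG.2 B
    (by intro i; by_cases h : i = i0 <;> simp [hB, h, hA, indepSet_empty])
    (by intro i j hij
        rcases eq_or_ne i i0 with h | h
        · have : j ≠ i0 := by rw [h] at hij; exact hij.symm
          simp [hB, this]
        · simp [hB, h])
  exact ⟨L i0, by simpa [hB] using hLB i0, (hLI i0).1, (hLI i0).2⟩

lemma construct [Fintype V] {G : SimpleGraph V} {p : ℕ} (hG : Wp p G) {S : Set V}
    (hS : IndepSet G S) (A : Fin p → Set V)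
    (hAU : ∀ i, A i ⊆ localSet G S) (hAI : ∀ i, IndepSet G (A i))
    (hAD : ∀ i j, i ≠ j → Disjoint (A i) (A j)) :
    ∃ M : Fin p → Set V, (∀ i, A i ⊆ M i) ∧ (∀ i j, i ≠ j → Disjoint (M i) (M j)) ∧
      (∀ i, M i ⊆ localSet G S) ∧ (∀ i, IndepSet G (M i)) ∧
      (∀ i, (M i).ncard = alphaNum G - S.ncard) := by
  suffices h : ∀ k, k ≤ p → ∃ M : Fin p → Set V, (∀ i, A i ⊆ M i) ∧
      (∀ i j, i ≠ j → Disjoint (M i) (M j)) ∧ (∀ i, M i ⊆ localSet G S) ∧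
      (∀ i, IndepSet G (M i)) ∧
      (∀ i : Fin p, (i : ℕ) < k → (M i).ncard = alphaNum G - S.ncard) by
    obtain ⟨M, h1, h2, h3, h4, h5⟩ := h p le_rfl
    exact ⟨M, h1, h2, h3, h4, fun i => h5 i i.2⟩
  intro k
  induction k with
  | zero => exact fun _ => ⟨A, fun i => subset_rfl, hAD, hAU, hAI, fun i h => absurd h (by omega)⟩
  | succ k ih =>
    intro hk
    obtain ⟨M, h1, h2, h3, h4, h5⟩ := ih (by omega)
    set κ : Fin p := ⟨k, by omega⟩ with hκ
    have hdisjS : ∀ i, Disjoint S (M i) := fun i => localSet_disjoint (h3 i)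
    set B : Fin p → Set V := fun i => if i = κ then M κ ∪ S else M i with hB
    have hBI : ∀ i, IndepSet G (B i) := by
      intro i
      rcases eq_or_ne i κ with h | h
      · simp only [hB, h, if_pos rfl]
        rw [Set.union_comm]
        exact union_indep hS (h4 κ) (h3 κ)
      · simp only [hB, if_neg h]; exact h4 i
    have hBD : ∀ i j, i ≠ j → Disjoint (B i) (B j) := by
      intro i j hij
      rcases eq_or_ne i κ with h | h
      · have hj : j ≠ κ := by rw [h] at hij; exact hij.symm
        simp only [hB, h, if_pos rfl, if_neg hj]
        exact Set.disjoint_union_left.mpr ⟨h2 κ j (h ▸ hij), hdisjS j⟩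
      · rcases eq_or_ne j κ with h' | h'
        · simp only [hB, if_neg h, h', if_pos rfl]
          exact (Set.disjoint_union_left.mpr ⟨h2 κ i (h' ▸ hij.symm), hdisjS i⟩).symm
        · simp only [hB, if_neg h, if_neg h']; exact h2 i j hij
    obtain ⟨L, hLD, hLI, hLB⟩ := hG.2 B hBI hBD
    have hSL : S ⊆ L κ := by
      refine Set.Subset.trans ?_ (hLB κ)
      simp only [hB, if_pos rfl]
      exact Set.subset_union_right
    have hMκL : M κ ⊆ L κ := by
      refine Set.Subset.trans ?_ (hLB κ)
      simp only [hB, if_pos rfl]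
      exact Set.subset_union_left
    have hML : ∀ j, j ≠ κ → M j ⊆ L j := by
      intro j hj
      have := hLB j
      simpa only [hB, if_neg hj] using this
    refine ⟨fun i => if i = κ then L κ \ S else M i, ?_, ?_, ?_, ?_, ?_⟩ <;> beta_reduce
    · intro i
      rcases eq_or_ne i κ with h | h
      · rw [if_pos h]
        intro a ha
        have ha' : a ∈ M κ := h ▸ h1 i ha
        exact ⟨hMκL ha', (mem_localSet.1 (hAU i ha)).1⟩
      · rw [if_neg h]; exact h1 i
    · intro i j hij
      rcases eq_or_ne i κ with h | h
      · have hj : j ≠ κ := by rw [h] at hij; exact hij.symm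
        rw [if_pos h, if_neg hj]
        exact (hLD κ j (h ▸ hij)).mono Set.diff_subset (hML j hj)
      · rcases eq_or_ne j κ with h' | h'
        · rw [if_neg h, if_pos h']
          exact ((hLD κ i (h' ▸ hij.symm)).mono Set.diff_subset (hML i h)).symm
        · rw [if_neg h, if_neg h']; exact h2 i j hij
    · intro i
      rcases eq_or_ne i κ with h | h
      · rw [if_pos h]
        exact diff_subset_localSet (hLI κ).1 hSL
      · rw [if_neg h]; exact h3 i
    · intro i
      rcases eq_or_ne i κ with h | h
      · rw [if_pos h]
        exact (hLI κ).1.mono Set.diff_subset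
      · rw [if_neg h]; exact h4 i
    · intro i hi
      rcases eq_or_ne i κ with h | h
      · rw [if_pos h, Set.ncard_diff hSL (Set.toFinite _), (hLI κ).2]
      · rw [if_neg h]
        refine h5 i ?_
        have : (i : ℕ) ≠ k := fun hc => h (Fin.ext hc)
        omega

lemma indep_image [Fintype V] {G : SimpleGraph V} {U : Set V} {t : Set U}
    (h : IndepSet (G.induce U) t) : IndepSet G (Subtype.val '' t) := by
  rintro a ⟨a', ha', rfl⟩ b ⟨b', hb', rfl⟩ hadj
  exact h ha' hb' hadj

lemma key [Fintype V] {G : SimpleGraph V} {p : ℕ} (hp : 1 ≤ p) (hG : Wp p G) {S : Set V}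
    (hS : IndepSet G S) (hcard : S.ncard < alphaNum G) :
    Wp p (G.induce (localSet G S)) ∧
      alphaNum (G.induce (localSet G S)) = alphaNum G - S.ncard := by
  set U : Set V := localSet G S with hU
  -- upper bound
  have hbound : ∀ t : Set U, IndepSet (G.induce U) t → t.ncard ≤ alphaNum G - S.ncard := by
    intro t ht
    have himg : IndepSet G (Subtype.val '' t) := indep_image ht
    have hsubU : Subtype.val '' t ⊆ U := by rintro a ⟨a', _, rfl⟩; exact a'.2
    have hunion : IndepSet G (S ∪ Subtype.val '' t) := union_indep hS himg hsubU
    have hdisj : Disjoint S (Subtype.val '' t) := localSet_disjoint hsubU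
    have hcnt : (S ∪ Subtype.val '' t).ncard = S.ncard + t.ncard := by
      rw [Set.ncard_union_eq hdisj (Set.toFinite _) (Set.toFinite _),
        Set.ncard_image_of_injective _ Subtype.val_injective]
    have hle := ncard_le_alphaNum hunion
    omega
  -- the construction, transferred to the subtype
  have hmain : ∀ A : Fin p → Set U, (∀ i, IndepSet (G.induce U) (A i)) →
      (∀ i j, i ≠ j → Disjoint (A i) (A j)) →
      ∃ T : Fin p → Set U, (∀ i j, i ≠ j → Disjoint (T i) (T j)) ∧
        (∀ i, IndepSet (G.induce U) (T i) ∧ (T i).ncard = alphaNum G - S.ncard) ∧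
        (∀ i, A i ⊆ T i) := by
    intro A hAI hAD
    obtain ⟨M, h1, h2, h3, h4, h5⟩ := construct hG hS (fun i => Subtype.val '' A i)
      (fun i => by rintro a ⟨a', _, rfl⟩; exact a'.2)
      (fun i => indep_image (hAI i))
      (fun i j hij => Set.disjoint_image_of_injective Subtype.val_injective (hAD i j hij))
    refine ⟨fun i => Subtype.val ⁻¹' M i, ?_, ?_, ?_⟩
    · exact fun i j hij => Disjoint.preimage _ (h2 i j hij)
    · intro i
      constructor
      · intro a ha b hb hadj
        exact h4 i ha hb hadj
      · have himg : Subtype.val '' (Subtype.val ⁻¹' M i : Set U) = M i := by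
          rw [Subtype.image_preimage_coe]
          exact Set.inter_eq_self_of_subset_right (h3 i)
        rw [← Set.ncard_image_of_injective _ Subtype.val_injective, himg]
        exact h5 i
    · intro i a ha
      exact h1 i ⟨a, ha, rfl⟩
  -- alphaNum of the induced graph
  have halpha : alphaNum (G.induce U) = alphaNum G - S.ncard := by
    refine le_antisymm (alphaNum_le hbound) ?_
    obtain ⟨T, hTD, hTI, -⟩ := hmain (fun _ => ∅) (fun _ => indepSet_empty _)
      (fun i j _ => by simp)
    have hle := ncard_le_alphaNum (hTI ⟨0, hp⟩).1
    have heq := (hTI ⟨0, hp⟩).2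
    omega
  refine ⟨⟨?_, ?_⟩, halpha⟩
  · -- p ≤ card U
    obtain ⟨T, hTD, hTI, -⟩ := hmain (fun _ => ∅) (fun _ => indepSet_empty _)
      (fun i j _ => by simp)
    have hne : ∀ i, (T i).Nonempty := by
      intro i
      have := (hTI i).2
      exact Set.nonempty_of_ncard_ne_zero (by omega)
    choose f hf using hne
    have hinj : Function.Injective f := by
      intro i j hij
      by_contra hne'
      exact Set.disjoint_left.mp (hTD i j hne') (hf i) (hij ▸ hf j)
    calc p = Fintype.card (Fin p) := (Fintype.card_fin p).symm
      _ ≤ Fintype.card U := Fintype.card_le_of_injective f hinj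
  · intro A hAI hAD
    obtain ⟨T, hTD, hTI, hTA⟩ := hmain A hAI hAD
    exact ⟨T, hTD, fun i => ⟨(hTI i).1, by rw [(hTI i).2, halpha]⟩, hTA⟩

lemma no_isolated {W : Type*} [Fintype W] {H : SimpleGraph W} {p : ℕ} (hp : 2 ≤ p)
    (hH : Wp p H) (v : W) : ∃ u, H.Adj v u := by
  by_contra hcon
  push_neg at hcon
  set i0 : Fin p := ⟨0, by omega⟩
  set i1 : Fin p := ⟨1, by omega⟩
  have hne : i0 ≠ i1 := by simp [i0, i1, Fin.ext_iff]
  set A : Fin p → Set W := fun i => if i = i0 then {v} else ∅ with hA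
  obtain ⟨T, hTD, hTI, hTA⟩ := hH.2 A
    (by intro i
        rcases eq_or_ne i i0 with h | h
        · rw [hA]; beta_reduce; rw [if_pos h]
          intro a ha b hb hadj
          rw [Set.mem_singleton_iff] at ha hb
          subst ha; subst hb
          exact hcon b hadj
        · rw [hA]; beta_reduce; rw [if_neg h]; exact indepSet_empty H)
    (by intro i j hij
        rcases eq_or_ne i i0 with h | h
        · have hj : j ≠ i0 := by rw [h] at hij; exact hij.symm
          rw [hA]; beta_reduce; rw [if_neg hj]; exact Set.disjoint_empty _
        · rw [hA]; beta_reduce; rw [if_neg h]; exact Set.empty_disjoint _)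
  have hv0 : v ∈ T i0 := by
    have := hTA i0
    rw [hA] at this; beta_reduce at this; rw [if_pos rfl] at this
    exact this rfl
  have hv1 : v ∉ T i1 := fun h => Set.disjoint_left.mp (hTD i0 i1 hne) hv0 h
  have hind : IndepSet H (insert v (T i1)) := by
    intro a ha b hb hadj
    rcases ha with rfl | ha
    · exact hcon b hadj
    · rcases hb with rfl | hb
      · exact hcon a hadj.symm
      · exact (hTI i1).1 ha hb hadj
  have hc : (insert v (T i1)).ncard = alphaNum H + 1 := by
    rw [Set.ncard_insert_of_notMem hv1 (Set.toFinite _), (hTI i1).2]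
  have := ncard_le_alphaNum hind
  omega


theorem stmt16 [Fintype V] (G : SimpleGraph V) (p : ℕ) (hp : 1 ≤ p)
    (hG : Wp p G) (halpha : 1 < alphaNum G) :
    (∀ x : V, Wp p (G.induce (localSet G {x}))) ∧
      ∀ S : Set V, IndepSet G S → S.ncard < alphaNum G →
        Wp p (G.induce (localSet G S)) ∧
          (2 ≤ p → ∀ v : (localSet G S : Set V),
            ∃ u : (localSet G S : Set V), (G.induce (localSet G S)).Adj v u) := by
  have hsecond : ∀ S : Set V, IndepSet G S → S.ncard < alphaNum G →
      Wp p (G.induce (localSet G S)) ∧ (2 ≤ p → ∀ v : (localSet G S : Set V),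
        ∃ u : (localSet G S : Set V), (G.induce (localSet G S)).Adj v u) := by
    intro S hS hc
    have hk := key hp hG hS hc
    exact ⟨hk.1, fun hp2 v => no_isolated hp2 hk.1 v⟩
  refine ⟨fun x => ?_, hsecond⟩
  have hx : IndepSet G {x} := by
    intro a ha b hb hadj
    rw [Set.mem_singleton_iff] at ha hb
    subst ha; subst hb
    exact G.irrefl hadj
  have hc : ({x} : Set V).ncard < alphaNum G := by
    rw [Set.ncard_singleton]; omega
  exact (hsecond {x} hx hc).1
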